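/- Define φ_k(x) = (1−x²)²(1−x) R_k^{(3,2)}(x) for k ≥ 0, where R_k^{(3,2)} is the normalized Jacobi polynomial. Then the fifth derivative satisfies D⁵φ_k(x) = −3(k+1)(k+2)(k+4)(k+5) R_k^{(2,3)}(x). -/

import Mathlib

/-- Classical Jacobi polynomial `P_n^{(a,b)}(x)` (real parameters), via the
hypergeometric sum representation. -/
noncomputable def jacobiP (n : ℕ) (a b x : ℝ) : ℝ :=
  (Real.Gamma (a + n + 1) / (n.factorial * Real.Gamma (a + b + n + 1))) *
    ∑ m ∈ Finset.range (n + 1),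
      (n.choose m : ℝ) * (Real.Gamma (a + b + n + m + 1) / Real.Gamma (a + m + 1)) *
        ((x - 1) / 2) ^ m

/-- Normalized Jacobi polynomial `R_n^{(a,b)}(x) = P_n^{(a,b)}(x)/P_n^{(a,b)}(1)`. -/
noncomputable def jacobiR (n : ℕ) (a b x : ℝ) : ℝ := jacobiP n a b x / jacobiP n a b 1

open Finset Polynomial

lemma jacobiR_natParams (n a b : ℕ) (x : ℝ) :
    jacobiR n (a:ℝ) (b:ℝ) x = ∑ m ∈ Finset.range (n+1),
      ((n.choose m : ℝ) * (a.factorial : ℝ) * (((a+b+n+m).factorial : ℝ)) /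
        (((a+b+n).factorial : ℝ) * (((a+m).factorial : ℝ)))) * ((x-1)/2)^m := by
  have hG : ∀ (j : ℕ) (y : ℝ), y = (j:ℝ) + 1 → Real.Gamma y = j.factorial := by
    rintro j y rfl; exact Real.Gamma_nat_eq_factorial j
  unfold jacobiR jacobiP
  rw [hG (a+n) _ (by push_cast; ring), hG (a+b+n) _ (by push_cast; ring)]
  have hS1 : ∑ m ∈ Finset.range (n+1),
      (n.choose m : ℝ) * (Real.Gamma ((a:ℝ)+b+n+m+1) / Real.Gamma ((a:ℝ)+m+1)) * (((1:ℝ)-1)/2)^m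
      = ((a+b+n).factorial : ℝ) / (a.factorial : ℝ) := by
    rw [Finset.sum_eq_single 0]
    · rw [hG (a+b+n) _ (by push_cast; ring), hG a _ (by push_cast; ring)]
      simp
    · intro m _ hm
      simp [zero_pow hm]
    · simp
  rw [hS1, mul_div_mul_left]
  swap
  · positivity
  rw [div_div_eq_mul_div, Finset.sum_mul, Finset.sum_div]
  refine Finset.sum_congr rfl fun m _ => ?_
  rw [hG (a+b+n+m) _ (by push_cast; ring), hG (a+m) _ (by push_cast; ring)]
  have h1 : ((a+m).factorial : ℝ) ≠ 0 := by positivity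
  have h2 : (((a+b+n).factorial : ℝ)) ≠ 0 := by positivity
  field_simp

noncomputable def cc (k m : ℕ) : ℝ :=
  (k.choose m : ℝ) * 6 * ((k+m+5).factorial : ℝ) / (((k+5).factorial : ℝ) * ((m+3).factorial : ℝ))
noncomputable def dd (k m : ℕ) : ℝ :=
  (k.choose m : ℝ) * 2 * ((k+m+5).factorial : ℝ) / (((k+5).factorial : ℝ) * ((m+2).factorial : ℝ))

lemma cc_zero {k m : ℕ} (h : k < m) : cc k m = 0 := by
  simp [cc, Nat.choose_eq_zero_of_lt h]

lemma dd_zero {k m : ℕ} (h : k < m) : dd k m = 0 := by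
  simp [dd, Nat.choose_eq_zero_of_lt h]

lemma R32 (k : ℕ) (x : ℝ) :
    jacobiR k 3 2 x = ∑ m ∈ Finset.range (k+1), cc k m * ((x-1)/2)^m := by
  have h := jacobiR_natParams k 3 2 x
  norm_num at h
  rw [h]
  refine Finset.sum_congr rfl fun m _ => ?_
  rw [show 3+2+k+m = k+m+5 by omega, show 3+2+k = k+5 by omega, show 3+m = m+3 by omega]
  norm_num [cc, Nat.factorial]

lemma R23 (k : ℕ) (x : ℝ) :
    jacobiR k 2 3 x = ∑ m ∈ Finset.range (k+1), dd k m * ((x-1)/2)^m := by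
  have h := jacobiR_natParams k 2 3 x
  norm_num at h
  rw [h]
  refine Finset.sum_congr rfl fun m _ => ?_
  rw [show 2+3+k+m = k+m+5 by omega, show 2+3+k = k+5 by omega, show 2+m = m+2 by omega]
  norm_num [dd, Nat.factorial]

/-- The key scalar identity. -/
lemma key (k m : ℕ) :
    ((m:ℝ)+1)*((m:ℝ)+2)*((m:ℝ)+3)*((m:ℝ)+4)*((m:ℝ)+5) * (cc k m + 2*cc k (m+1) + cc k (m+2))
      = 3*((k:ℝ)+1)*((k:ℝ)+2)*((k:ℝ)+4)*((k:ℝ)+5) * dd k m := by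
  rcases le_or_gt m k with hmk | hmk
  · have e1 : (k.choose (m+1) : ℝ) * ((m:ℝ)+1) = (k.choose m : ℝ) * ((k:ℝ) - m) := by
      have h := congrArg (Nat.cast (R := ℝ)) (Nat.choose_succ_right_eq k m)
      push_cast [Nat.cast_sub hmk] at h
      linarith
    have e2 : (k.choose (m+2) : ℝ) * (((m:ℝ)+2)*((m:ℝ)+1))
        = (k.choose m : ℝ) * (((k:ℝ)-m) * ((k:ℝ)-m-1)) := by
      rcases lt_or_eq_of_le hmk with h | h
      · have h2 := congrArg (Nat.cast (R := ℝ)) (Nat.choose_succ_right_eq k (m+1))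
        have hm1 : m + 1 ≤ k := h
        push_cast [Nat.cast_sub hm1] at h2
        nlinarith [e1, h2]
      · have hz1 : k.choose (m+2) = 0 := Nat.choose_eq_zero_of_lt (by omega)
        have hz2 : (k:ℝ) - m = 0 := by rw [h]; ring
        rw [hz1, hz2]
        norm_num
    have he1 : (k.choose (m+1) : ℝ) = (k.choose m : ℝ) * ((k:ℝ) - m) / ((m:ℝ)+1) := by
      rw [eq_div_iff (by positivity)]; exact e1
    have he2 : (k.choose (m+2) : ℝ)
        = (k.choose m : ℝ) * (((k:ℝ)-m) * ((k:ℝ)-m-1)) / (((m:ℝ)+2)*((m:ℝ)+1)) := by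
      rw [eq_div_iff (by positivity)]; exact e2
    have f1 : (((m+1)+3).factorial : ℝ) = ((m:ℝ)+4) * ((m+3).factorial : ℝ) := by
      rw [show (m+1)+3 = (m+3)+1 by omega, Nat.factorial_succ]; push_cast; ring
    have f2 : (((m+2)+3).factorial : ℝ) = ((m:ℝ)+5)*((m:ℝ)+4) * ((m+3).factorial : ℝ) := by
      rw [show (m+2)+3 = ((m+3)+1)+1 by omega, Nat.factorial_succ, Nat.factorial_succ]
      push_cast; ring
    have f3 : ((k+(m+1)+5).factorial : ℝ) = ((k:ℝ)+(m:ℝ)+6) * ((k+m+5).factorial : ℝ) := by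
      rw [show k+(m+1)+5 = (k+m+5)+1 by omega, Nat.factorial_succ]; push_cast; ring
    have f4 : ((k+(m+2)+5).factorial : ℝ)
        = ((k:ℝ)+(m:ℝ)+7)*((k:ℝ)+(m:ℝ)+6) * ((k+m+5).factorial : ℝ) := by
      rw [show k+(m+2)+5 = ((k+m+5)+1)+1 by omega, Nat.factorial_succ, Nat.factorial_succ]
      push_cast; ring
    have f5 : ((m+3).factorial : ℝ) = ((m:ℝ)+3) * ((m+2).factorial : ℝ) := by
      rw [show m+3 = (m+2)+1 by omega, Nat.factorial_succ]; push_cast; ring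
    have h1 : ((m+2).factorial : ℝ) ≠ 0 := by positivity
    have h2 : (((k+5).factorial : ℝ)) ≠ 0 := by positivity
    have h3 : ((m:ℝ)+1) ≠ 0 := by positivity
    have h4 : ((m:ℝ)+2) ≠ 0 := by positivity
    have h5 : ((m:ℝ)+3) ≠ 0 := by positivity
    simp only [cc, dd, he1, he2, f1, f2, f3, f4, f5]
    field_simp
    ring
  · have z1 : k.choose m = 0 := Nat.choose_eq_zero_of_lt hmk
    have z2 : k.choose (m+1) = 0 := Nat.choose_eq_zero_of_lt (by omega)
    have z3 : k.choose (m+2) = 0 := Nat.choose_eq_zero_of_lt (by omega)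
    simp [cc, dd, z1, z2, z3]

noncomputable def qp (m : ℕ) : ℝ[X] := (C (2⁻¹ : ℝ) * (X - C 1)) ^ m

lemma qp_eval (m : ℕ) (x : ℝ) : (qp m).eval x = ((x-1)/2)^m := by
  simp [qp]
  ring

lemma qp_deriv' (j : ℕ) : derivative (qp j) = C ((j:ℝ)/2) * qp (j-1) := by
  cases j with
  | zero => simp [qp]
  | succ n =>
    unfold qp
    rw [derivative_pow]
    apply Polynomial.funext
    intro z
    simp
    ring

lemma iter5_qp (m : ℕ) : derivative^[5] (qp (m+5)) =
    C (((m:ℝ)+1)*((m:ℝ)+2)*((m:ℝ)+3)*((m:ℝ)+4)*((m:ℝ)+5)/32) * qp m := by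
  have h : derivative^[5] (qp (m+5))
      = derivative (derivative (derivative (derivative (derivative (qp (m+5)))))) := rfl
  rw [h]
  simp only [qp_deriv', derivative_C_mul]
  apply Polynomial.funext
  intro z
  simp only [eval_mul, eval_C, qp_eval, show m+5-1-1-1-1-1 = m from rfl]
  push_cast
  ring

lemma iter5_qp4 : derivative^[5] (qp 4) = 0 := by
  have h : derivative^[5] (qp 4)
      = derivative (derivative (derivative (derivative (derivative (qp 4))))) := rfl
  rw [h]
  simp only [qp_deriv', derivative_C_mul]
  norm_num

lemma iter5_qp3 : derivative^[5] (qp 3) = 0 := by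
  have h : derivative^[5] (qp 3)
      = derivative (derivative (derivative (derivative (derivative (qp 3))))) := rfl
  rw [h]
  simp only [qp_deriv', derivative_C_mul]
  norm_num

lemma iteratedDeriv_poly (n : ℕ) (p : ℝ[X]) (x : ℝ) :
    iteratedDeriv n (fun y => p.eval y) x = (derivative^[n] p).eval x := by
  induction n generalizing p x with
  | zero => simp
  | succ n ih =>
    rw [iteratedDeriv_succ', Function.iterate_succ_apply]
    have hd : deriv (fun y => p.eval y) = fun y => (derivative p).eval y := by
      funext y
      exact Polynomial.deriv (p := p)
    rw [hd, ih]

lemma iter_deriv_add (n : ℕ) (p q : ℝ[X]) :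
    derivative^[n] (p + q) = derivative^[n] p + derivative^[n] q := by
  simp_rw [← Module.End.pow_apply, map_add]

lemma hsplit (k : ℕ) :
    ((1 - X^2)^2 * (1 - X) * ∑ m ∈ Finset.range (k+1), C (cc k m) * qp m : ℝ[X])
      = (∑ m ∈ Finset.range (k+3), C (-32*(cc k m + 2*cc k (m+1) + cc k (m+2))) * qp (m+5))
        + C (-32*(2*cc k 0 + cc k 1)) * qp 4 + C (-32*(cc k 0)) * qp 3 := by
  apply Polynomial.funext
  intro z
  simp only [eval_add, eval_mul, eval_pow, eval_sub, eval_one, eval_C, eval_X, eval_finset_sum,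
    qp_eval]
  set t : ℝ := (z-1)/2 with ht
  set A : ℝ := ∑ m ∈ Finset.range (k+1), cc k m * t^m with hA
  have hw : (1 - z^2)^2 * (1-z) = -32*(t^5 + 2*t^4 + t^3) := by rw [ht]; ring
  have h5 : ∑ m ∈ Finset.range (k+3), cc k m * t^(m+5) = t^5 * A := by
    rw [Finset.sum_range_succ, Finset.sum_range_succ, cc_zero (by omega), cc_zero (by omega),
      hA, Finset.mul_sum]
    simp only [zero_mul, add_zero]
    exact Finset.sum_congr rfl fun m _ => by ring
  have h4A : ∑ m ∈ Finset.range (k+3+1), cc k m * t^(m+4) = t^4 * A := by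
    rw [Finset.sum_range_succ, Finset.sum_range_succ, Finset.sum_range_succ,
      cc_zero (by omega), cc_zero (by omega), cc_zero (by omega), hA, Finset.mul_sum]
    simp only [zero_mul, add_zero]
    exact Finset.sum_congr rfl fun m _ => by ring
  have h4 : ∑ m ∈ Finset.range (k+3), cc k (m+1) * t^(m+5) = t^4 * A - cc k 0 * t^4 := by
    have hb := Finset.sum_range_succ' (fun m => cc k m * t^(m+4)) (k+3)
    rw [h4A] at hb
    have hc : ∑ m ∈ Finset.range (k+3), cc k (m+1) * t^(m+1+4)
        = ∑ m ∈ Finset.range (k+3), cc k (m+1) * t^(m+5) :=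
      Finset.sum_congr rfl fun m _ => by norm_num
    rw [hc] at hb
    norm_num at hb
    linarith
  have h3A : ∑ m ∈ Finset.range (k+3+1+1), cc k m * t^(m+3) = t^3 * A := by
    rw [Finset.sum_range_succ, Finset.sum_range_succ, Finset.sum_range_succ, Finset.sum_range_succ,
      cc_zero (by omega), cc_zero (by omega), cc_zero (by omega), cc_zero (by omega),
      hA, Finset.mul_sum]
    simp only [zero_mul, add_zero]
    exact Finset.sum_congr rfl fun m _ => by ring
  have h3 : ∑ m ∈ Finset.range (k+3), cc k (m+2) * t^(m+5)
      = t^3 * A - cc k 0 * t^3 - cc k 1 * t^4 := by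
    have hb := Finset.sum_range_succ' (fun m => cc k m * t^(m+3)) (k+3+1)
    rw [h3A] at hb
    have hb2 := Finset.sum_range_succ' (fun m => cc k (m+1) * t^(m+1+3)) (k+3)
    rw [hb2] at hb
    have hc : ∑ m ∈ Finset.range (k+3), cc k (m+1+1) * t^(m+1+1+3)
        = ∑ m ∈ Finset.range (k+3), cc k (m+2) * t^(m+5) :=
      Finset.sum_congr rfl fun m _ => by norm_num
    rw [hc] at hb
    have hq4 : t^(0+1+3) = t^4 := by norm_num
    rw [hq4] at hb
    have hq3 : t^(0+3) = t^3 := by norm_num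
    rw [hq3] at hb
    linarith
  calc (1 - z^2)^2 * (1-z) * A
      = -32 * ((∑ m ∈ Finset.range (k+3), cc k m * t^(m+5))
          + 2 * (∑ m ∈ Finset.range (k+3), cc k (m+1) * t^(m+5))
          + (∑ m ∈ Finset.range (k+3), cc k (m+2) * t^(m+5)))
        + -32*(2*cc k 0 + cc k 1) * t^4 + -32*(cc k 0) * t^3 := by
        rw [hw, h5, h4, h3]; ring
    _ = _ := by
        have hsp : ∑ m ∈ Finset.range (k+3),
            -32*(cc k m + 2*cc k (m+1) + cc k (m+2)) * t^(m+5)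
            = ∑ m ∈ Finset.range (k+3), (-32*(cc k m * t^(m+5))
              + (-64)*(cc k (m+1) * t^(m+5)) + (-32)*(cc k (m+2)*t^(m+5))) :=
          Finset.sum_congr rfl fun m _ => by ring
        rw [hsp, Finset.sum_add_distrib, Finset.sum_add_distrib,
          ← Finset.mul_sum, ← Finset.mul_sum, ← Finset.mul_sum]
        ring

theorem fifthDeriv_basis (k : ℕ) (x : ℝ) :
    iteratedDeriv 5 (fun y => (1 - y ^ 2) ^ 2 * (1 - y) * jacobiR k 3 2 y) x =
      -3 * ((k : ℝ) + 1) * ((k : ℝ) + 2) * ((k : ℝ) + 4) * ((k : ℝ) + 5) * jacobiR k 2 3 x := by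
  have hL : (fun y : ℝ => (1 - y ^ 2) ^ 2 * (1 - y) * jacobiR k 3 2 y)
      = fun y => (((1 - X^2)^2 * (1 - X)
          * ∑ m ∈ Finset.range (k+1), C (cc k m) * qp m : ℝ[X])).eval y := by
    funext y
    rw [R32]
    simp only [eval_mul, eval_pow, eval_sub, eval_one, eval_finset_sum, eval_C, eval_X, qp_eval]
  rw [hL, iteratedDeriv_poly, hsplit k, iter_deriv_add, iter_deriv_add,
    iterate_derivative_sum]
  simp only [iterate_derivative_C_mul, iter5_qp, iter5_qp4, iter5_qp3, mul_zero, add_zero]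
  rw [R23]
  simp only [eval_finset_sum, eval_mul, eval_C, qp_eval]
  have hext : ∑ m ∈ Finset.range (k+3), dd k m * ((x-1)/2)^m
      = ∑ m ∈ Finset.range (k+1), dd k m * ((x-1)/2)^m := by
    refine (Finset.sum_subset (Finset.range_subset_range.2 (by omega)) ?_).symm
    intro j _ hj
    have hkj : k < j := by simp only [Finset.mem_range] at hj; omega
    rw [dd_zero hkj, zero_mul]
  rw [← hext, Finset.mul_sum]
  refine Finset.sum_congr rfl fun m _ => ?_
  linear_combination (-(((x-1)/2)^m)) * key k m
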